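/- Let G be a group (finite or infinite) with |G/Z(G)| = p³ for a prime p. If C_G(x) has index p in G for some x, then G has no other centralizer of index p; i.e., any two element centralizers of index p in G coincide. -/

import Mathlib

/-- If `[G : Z(G)] = p^3` and `C_G(x)` has index `p`, then `C_G(x)` is abelian. -/
lemma centralizer_index_p_abelian
    (G : Type*) [Group G] (p : ℕ) (hp : p.Prime)
    (h : Nat.card (G ⧸ Subgroup.center G) = p ^ 3)
    (x : G)
    (hx : (Subgroup.centralizer ({x} : Set G)).index = p) :
    ∀ a b : G, a ∈ Subgroup.centralizer ({x} : Set G) →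
      b ∈ Subgroup.centralizer ({x} : Set G) → a * b = b * a := by
  set Z := Subgroup.center G with hZdef
  set Cx := Subgroup.centralizer ({x} : Set G) with hCxdef
  have hZ : Z.index = p ^ 3 := by rw [Subgroup.index_eq_card, h]
  have hle : Z ≤ Cx := Subgroup.center_le_centralizer _
  have hrel : Z.relIndex Cx * p = p ^ 3 := by
    have := Subgroup.relIndex_mul_index hle
    rw [hx, hZ] at this; exact this
  have hp0 : p ≠ 0 := hp.ne_zero
  have hrel2 : Z.relIndex Cx = p ^ 2 := by
    have : Z.relIndex Cx * p = p ^ 2 * p := by rw [hrel]; ring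
    exact Nat.eq_of_mul_eq_mul_right (Nat.pos_of_ne_zero hp0) this
  -- x is not central
  have hxZ : x ∉ Z := by
    intro hxz
    have : Cx = ⊤ := by
      rw [eq_top_iff]
      intro g _
      rw [hCxdef, Subgroup.mem_centralizer_iff]
      rintro k rfl
      exact ((Subgroup.mem_center_iff.mp hxz) g).symm
    rw [this, Subgroup.index_top] at hx
    exact hp.ne_one hx.symm
  -- the subgroup M = Z ⊔ ⟨x⟩
  set M := Z ⊔ Subgroup.zpowers x with hMdef
  have hxM : x ∈ M := Subgroup.mem_sup_right (Subgroup.mem_zpowers x)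
  have hZM : Z ≤ M := le_sup_left
  have hMCx : M ≤ Cx := by
    refine sup_le hle ?_
    rw [Subgroup.zpowers_le, hCxdef, Subgroup.mem_centralizer_iff]
    rintro k rfl; rfl
  -- M centralizes Cx
  have hMcent : ∀ m ∈ M, ∀ c ∈ Cx, m * c = c * m := by
    have : M ≤ Subgroup.centralizer (Cx : Set G) := by
      refine sup_le (Subgroup.center_le_centralizer _) ?_
      rw [Subgroup.zpowers_le, Subgroup.mem_centralizer_iff]
      intro c hc
      exact (Subgroup.mem_centralizer_iff.mp hc x (Set.mem_singleton x)).symm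
    intro m hm c hc
    exact (Subgroup.mem_centralizer_iff.mp (this hm) c hc).symm
  -- relIndex of M in Cx is 1 or p
  have hZMne : Z.relIndex M ≠ 1 := by
    intro h1
    exact hxZ (Subgroup.relIndex_eq_one.mp h1 hxM)
  have hchain : Z.relIndex M * M.relIndex Cx = p ^ 2 := by
    rw [← hrel2]; exact Subgroup.relIndex_mul_relIndex Z M Cx hZM hMCx
  have hdvd : M.relIndex Cx ∣ p ^ 2 := Dvd.intro_left _ hchain
  have hcases : M.relIndex Cx = 1 ∨ M.relIndex Cx = p := by
    obtain ⟨i, hi, hpi⟩ := (Nat.dvd_prime_pow hp).mp hdvd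
    interval_cases i
    · exact Or.inl (by rw [hpi, pow_zero])
    · exact Or.inr (by rw [hpi, pow_one])
    · exfalso
      rw [hpi] at hchain
      have : Z.relIndex M = 1 :=
        Nat.eq_of_mul_eq_mul_right (pow_pos hp.pos 2) (by rw [hchain, one_mul])
      exact hZMne this
  -- work inside Cx
  set M' := M.subgroupOf Cx with hM'def
  have hM'center : M' ≤ Subgroup.center Cx := by
    rintro ⟨m, hmCx⟩ hm
    rw [Subgroup.mem_subgroupOf] at hm
    rw [Subgroup.mem_center_iff]
    rintro ⟨c, hcCx⟩
    ext
    exact (hMcent m hm c hcCx).symm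
  haveI : M'.Normal := by
    constructor
    intro n hn g
    have hcomm : g * n = n * g := Subgroup.mem_center_iff.mp (hM'center hn) g
    rw [hcomm, mul_inv_cancel_right]
    exact hn
  have hM'index : M'.index = M.relIndex Cx := rfl
  have hcard : Nat.card (Cx ⧸ M') = M.relIndex Cx := by
    rw [← hM'index, Subgroup.index_eq_card]
  haveI : IsCyclic (Cx ⧸ M') := by
    rcases hcases with h1 | hP
    · have : Nat.card (Cx ⧸ M') = 1 := by rw [hcard, h1]
      haveI : Subsingleton (Cx ⧸ M') :=
        Nat.card_eq_one_iff_unique.mp this |>.1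
      infer_instance
    · haveI : Fact p.Prime := ⟨hp⟩
      exact isCyclic_of_prime_card (by rw [hcard, hP])
  have hcomm := commutative_of_cyclic_center_quotient (QuotientGroup.mk' M')
    (by rw [QuotientGroup.ker_mk']; exact hM'center)
  intro a b ha hb
  have := hcomm ⟨a, ha⟩ ⟨b, hb⟩
  exact Subtype.ext_iff.mp this

theorem centralizers_of_index_p_coincide
    (G : Type*) [Group G] (p : ℕ) (hp : p.Prime)
    (h : Nat.card (G ⧸ Subgroup.center G) = p ^ 3)
    (x y : G)
    (hx : (Subgroup.centralizer ({x} : Set G)).index = p)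
    (hy : (Subgroup.centralizer ({y} : Set G)).index = p) :
    Subgroup.centralizer ({x} : Set G) = Subgroup.centralizer ({y} : Set G) := by
  set Z := Subgroup.center G with hZdef
  set Cx := Subgroup.centralizer ({x} : Set G) with hCxdef
  set Cy := Subgroup.centralizer ({y} : Set G) with hCydef
  by_contra hne
  have hp0 : p ≠ 0 := hp.ne_zero
  -- Cx ⊔ Cy = ⊤
  have hsup : Cx ⊔ Cy = ⊤ := by
    have hdvd : (Cx ⊔ Cy).index ∣ p := hx ▸ Subgroup.index_dvd_of_le le_sup_left
    rcases (Nat.dvd_prime hp).mp hdvd with h1 | hP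
    · exact Subgroup.index_eq_one.mp h1
    · exfalso
      have h1 : Cx.relIndex (Cx ⊔ Cy) * (Cx ⊔ Cy).index = Cx.index :=
        Subgroup.relIndex_mul_index le_sup_left
      rw [hP, hx] at h1
      have : Cx.relIndex (Cx ⊔ Cy) = 1 :=
        Nat.eq_of_mul_eq_mul_right (Nat.pos_of_ne_zero hp0) (by rw [h1, one_mul])
      have hyx : Cy ≤ Cx := le_trans le_sup_right (Subgroup.relIndex_eq_one.mp this)
      have h2 : Cy.relIndex Cx * Cx.index = Cy.index := Subgroup.relIndex_mul_index hyx
      rw [hx, hy] at h2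
      have : Cy.relIndex Cx = 1 :=
        Nat.eq_of_mul_eq_mul_right (Nat.pos_of_ne_zero hp0) (by rw [h2, one_mul])
      exact hne (le_antisymm (Subgroup.relIndex_eq_one.mp this) hyx)
  -- Cx ∩ Cy ≤ Z
  have habx := centralizer_index_p_abelian G p hp h x hx
  have haby := centralizer_index_p_abelian G p hp h y hy
  have hKZ : Cx ⊓ Cy ≤ Z := by
    rintro k ⟨hkx, hky⟩
    rw [hZdef, Subgroup.mem_center_iff]
    intro g
    have hg : g ∈ Subgroup.centralizer ({k} : Set G) := by
      have hsub : Cx ⊔ Cy ≤ Subgroup.centralizer ({k} : Set G) := by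
        refine sup_le ?_ ?_
        · intro c hc
          rw [Subgroup.mem_centralizer_iff]
          intro m hm
          rw [Set.mem_singleton_iff] at hm
          rw [hm]
          exact habx k c hkx hc
        · intro c hc
          rw [Subgroup.mem_centralizer_iff]
          intro m hm
          rw [Set.mem_singleton_iff] at hm
          rw [hm]
          exact haby k c hky hc
      exact hsub (hsup ▸ Subgroup.mem_top g)
    exact (Subgroup.mem_centralizer_iff.mp hg k (Set.mem_singleton k)).symm
  -- contradiction on indices
  have hZK : Z ≤ Cx ⊓ Cy :=
    le_inf (Subgroup.center_le_centralizer _) (Subgroup.center_le_centralizer _)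
  have hEq : Cx ⊓ Cy = Z := le_antisymm hKZ hZK
  have hZindex : Z.index = p ^ 3 := by rw [Subgroup.index_eq_card, h]
  have hbound : (Cx ⊓ Cy).index ≤ p * p := by
    calc (Cx ⊓ Cy).index ≤ Cx.index * Cy.index := Subgroup.index_inf_le
    _ = p * p := by rw [hx, hy]
  rw [hEq, hZindex] at hbound
  have : p * p < p ^ 3 := by nlinarith [hp.two_le]
  omega
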